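/- Let G be a linearly ordered group and let a, b, c, d be elements of G. For (x,y) ∈ G × G, the equation (a,b) = (a,c)·(x,y)·(d,b) holds in 𝓑(G) if and only if (c,d) ≼ (x,y) in the natural partial order of 𝓑(G). -/

import Mathlib

/-- The multiplication of the bicyclic extension `𝓑(G) = G × G` of a linearly ordered
group `G`: `(a,b)·(c,d) = (c·b⁻¹·a, d)` if `b < c`; `(a,d)` if `b = c`;
`(a, b·c⁻¹·d)` if `b > c`. -/
def bmul {G : Type*} [Group G] [LinearOrder G] (s t : G × G) : G × G :=
  if s.2 < t.1 then (t.1 * s.2⁻¹ * s.1, t.2)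
  else if s.2 = t.1 then (s.1, t.2)
  else (s.1, s.2 * t.1⁻¹ * t.2)

/-- The natural partial order on `𝓑(G)`: `s ≼ t` iff `s = e·t` for some idempotent
`e` of `𝓑(G)`; the idempotents of `𝓑(G)` are exactly the pairs `(x,x)`. -/
def ble {G : Type*} [Group G] [LinearOrder G] (s t : G × G) : Prop :=
  ∃ x : G, bmul (x, x) t = s

lemma ble_iff {G : Type*} [Group G] [LinearOrder G]
    (c d x y : G) : ble (c, d) (x, y) ↔ x ≤ c ∧ x⁻¹ * y = c⁻¹ * d := by
  constructor
  · rintro ⟨z, hz⟩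
    simp only [bmul, Prod.ext_iff] at hz
    split_ifs at hz with h1 h2
    · obtain ⟨hc, hd⟩ := hz
      simp only [inv_mul_cancel_right] at hc
      subst hc; subst hd; simp
    · obtain ⟨hc, hd⟩ := hz
      subst h2; subst hc; subst hd; simp
    · obtain ⟨hc, hd⟩ := hz
      subst hc; subst hd
      refine ⟨le_of_not_gt (fun h => h1 h), ?_⟩
      group
  · rintro ⟨h1, h2⟩
    refine ⟨c, ?_⟩
    rcases eq_or_lt_of_le h1 with h | h
    · subst h
      have : y = d := mul_left_cancel h2
      simp [bmul, this]
    · have hd : d = c * x⁻¹ * y := by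
        rw [mul_assoc, h2, mul_inv_cancel_left]
      simp [bmul, not_lt_of_gt h, h.ne', hd]

/-- Proposition 2.2(iii): `(a,b) = (a,c)·(x,y)·(d,b)` in `𝓑(G)` iff `(c,d) ≼ (x,y)`. -/
theorem eq_middle_factor_iff {G : Type*} [Group G] [LinearOrder G]
    [CovariantClass G G (· * ·) (· ≤ ·)]
    [CovariantClass G G (Function.swap (· * ·)) (· ≤ ·)]
    (a b c d : G) (x y : G) :
    (a, b) = bmul (bmul (a, c) (x, y)) (d, b) ↔ ble (c, d) (x, y) := by
  rw [ble_iff]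
  simp only [bmul, Prod.ext_iff]
  split_ifs with h1 h2 h3 h4 h5 h6 h7 h8 h9 <;> simp_all
  · constructor <;> intro h
    · exfalso
      have h' : d * y⁻¹ * (x * c⁻¹) * a = 1 * a := by
        rw [one_mul, mul_assoc (d * y⁻¹)]; exact h.symm
      have hk := mul_right_cancel h'
      rw [← mul_assoc, mul_inv_eq_one] at hk
      have hx : x < d * y⁻¹ * x := by
        have : 1 < d * y⁻¹ := by
          have := mul_lt_mul_left h2 y⁻¹
          rwa [mul_inv_cancel] at this
        calc x = 1 * x := (one_mul x).symm
        _ < d * y⁻¹ * x := mul_lt_mul_left this x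
      rw [hk] at hx
      exact absurd hx (not_lt_of_gt h1)
    · exact absurd h.1 (not_le_of_gt h1)
  · rw [mul_inv_eq_one]
    exact ⟨fun h => absurd h h1.ne', fun h => absurd h.2 h1.ne'⟩
  · rw [mul_inv_eq_one]
    exact ⟨fun h => absurd h.1 h1.ne', fun h => absurd h.1 (not_le_of_gt h1)⟩
  · rw [mul_inv_eq_one, eq_comm]
  · rw [mul_inv_eq_one]; exact h6
  · constructor <;> intro h <;> exfalso
    · apply h7.ne
      rw [eq_inv_of_mul_eq_one_left h]
      group
    · exact h7.ne (by rw [mul_assoc, h, mul_inv_cancel_left])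
  · rw [← h8]; group
  · rw [mul_inv_eq_one]
    exact ⟨fun h => absurd h h8, fun h => absurd (by rw [mul_assoc, h, mul_inv_cancel_left]) h8⟩
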